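/- Let 0 < α ≤ 1 and let u ∈ L¹_loc(ℝⁿ) satisfy, for some constant L and all cubes Q, the inequality (1/|Q|)∫_Q |u − u_Q| dx ≤ L · diam(Q)^α (equivalently, u has an α-Hölder continuous representative). If Mu ∈ L¹_loc(ℝⁿ), then Mu satisfies the same inequality with constant C(n)·L, i.e. Mu has an α-Hölder continuous representative with Hölder seminorm ≲ the Hölder seminorm of u. -/

import Mathlib

open MeasureTheory Metric ENNReal
open Filter

/-- The non-centred Hardy–Littlewood maximal function over axis-parallel cubes
(= sup-metric balls in `Fin n → ℝ`). -/
noncomputable def maximalFn {n : ℕ} (f : (Fin n → ℝ) → ℝ) (x : Fin n → ℝ) : ℝ≥0∞ :=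
  ⨆ (c : Fin n → ℝ) (r : ℝ) (_ : 0 < r) (_ : x ∈ ball c r),
    ENNReal.ofReal (⨍ y in ball c r, |f y|)

namespace Stmt4

variable {n : ℕ}

/-- average over a ball -/
noncomputable def avg (u : (Fin n → ℝ) → ℝ) (c : Fin n → ℝ) (r : ℝ) : ℝ :=
  ⨍ y in ball c r, u y

lemma mball_pos (c : Fin n → ℝ) {r : ℝ} (hr : 0 < r) :
    0 < (volume (ball c r)).toReal :=
  ENNReal.toReal_pos (measure_ball_pos _ _ hr).ne' measure_ball_lt_top.ne

lemma intOn_ball {u : (Fin n → ℝ) → ℝ} (hu : LocallyIntegrable u volume)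
    (c : Fin n → ℝ) (r : ℝ) : IntegrableOn u (ball c r) volume :=
  (hu.integrableOn_isCompact (isCompact_closedBall c r)).mono_set ball_subset_closedBall

/-- |average| ≤ average of abs -/
lemma abs_setAverage_le (f : (Fin n → ℝ) → ℝ) (s : Set (Fin n → ℝ)) :
    |⨍ x in s, f x| ≤ ⨍ x in s, |f x| := by
  rw [setAverage_eq, setAverage_eq]
  simp only [smul_eq_mul, abs_mul]
  have h1 : ‖∫ x in s, f x‖ ≤ ∫ x in s, |f x| := by
    simpa using norm_integral_le_integral_norm (μ := volume.restrict s) f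
  rw [Real.norm_eq_abs] at h1
  have h2 : |(volume.real s)⁻¹| = (volume.real s)⁻¹ := abs_of_nonneg (by positivity)
  rw [h2]
  exact mul_le_mul_of_nonneg_left h1 (by positivity)

/-- average of (f - a) -/
lemma setAverage_sub_const {f : (Fin n → ℝ) → ℝ} {c : Fin n → ℝ} {r : ℝ} (hr : 0 < r)
    (hf : IntegrableOn f (ball c r) volume) (a : ℝ) :
    ⨍ x in ball c r, (f x - a) = (⨍ x in ball c r, f x) - a := by
  rw [setAverage_eq, setAverage_eq, integral_sub hf (integrableOn_const measure_ball_lt_top.ne),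
    setIntegral_const, smul_sub, smul_smul, smul_eq_mul, smul_eq_mul, measureReal_def,
    inv_mul_cancel₀ (mball_pos c hr).ne', one_mul]

/-- average ≤ const from an a.e. bound; no integrability needed if the constant is nonneg. -/
lemma setAverage_le_const {f : (Fin n → ℝ) → ℝ} {c : Fin n → ℝ} {r : ℝ} (hr : 0 < r)
    {a : ℝ} (ha : 0 ≤ a) (h : ∀ᵐ x ∂(volume.restrict (ball c r)), f x ≤ a) :
    ⨍ x in ball c r, f x ≤ a := by
  by_cases hf : IntegrableOn f (ball c r) volume
  · rw [setAverage_eq, smul_eq_mul]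
    have h1 : ∫ x in ball c r, f x ≤ ∫ _x in ball c r, a :=
      integral_mono_ae hf (integrableOn_const measure_ball_lt_top.ne) h
    rw [setIntegral_const, smul_eq_mul] at h1
    calc (volume (ball c r)).toReal⁻¹ * ∫ x in ball c r, f x
        ≤ (volume (ball c r)).toReal⁻¹ * ((volume (ball c r)).toReal * a) := by
          exact mul_le_mul_of_nonneg_left h1 (by positivity)
      _ = a := by
          rw [← mul_assoc, inv_mul_cancel₀ (mball_pos c hr).ne', one_mul]
  · rw [setAverage_eq, integral_undef hf, smul_zero]
    exact ha

lemma ball_ae_closedBall (hn : 1 ≤ n) (c : Fin n → ℝ) (r : ℝ) :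
    (ball c r : Set (Fin n → ℝ)) =ᵐ[volume] closedBall c r := by
  haveI : Nonempty (Fin n) := ⟨⟨0, hn⟩⟩
  refine measure_symmDiff_eq_zero_iff.1 ?_
  refine measure_mono_null ?_ (MeasureTheory.Measure.addHaar_sphere volume c r)
  intro x hx
  rcases hx with h | h
  · exact absurd (ball_subset_closedBall h.1) h.2
  · rcases h with ⟨h1, h2⟩
    simp only [mem_closedBall, mem_ball, not_lt] at h1 h2
    exact le_antisymm h1 h2

lemma avg_closedBall (hn : 1 ≤ n) (f : (Fin n → ℝ) → ℝ) (c : Fin n → ℝ) (r : ℝ) :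
    ⨍ y in closedBall c r, f y = avg f c r := by
  unfold avg
  rw [setAverage_eq, setAverage_eq,
    setIntegral_congr_set (ball_ae_closedBall hn c r), measureReal_def, measureReal_def,
    measure_congr (ball_ae_closedBall hn c r)]

lemma vol_ratio {r r' : ℝ} (hr : 0 < r) (hr' : 0 < r') (c c' : Fin n → ℝ) :
    (volume (ball c' r')).toReal / (volume (ball c r)).toReal = (r' / r) ^ n := by
  rw [Real.volume_pi_ball _ hr, Real.volume_pi_ball _ hr',
    ENNReal.toReal_ofReal (by positivity), ENNReal.toReal_ofReal (by positivity)]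
  rw [← div_pow, Fintype.card_fin]
  congr 1
  field_simp

/-- comparison of averages over nested balls, given the Campanato bound -/
lemma avg_pair {u : (Fin n → ℝ) → ℝ} (hu : LocallyIntegrable u volume) {L' α : ℝ}
    (hC : ∀ (c : Fin n → ℝ) (r : ℝ), 0 < r →
      (⨍ x in ball c r, |u x - avg u c r|) ≤ L' * r ^ α)
    {c c' : Fin n → ℝ} {r r' : ℝ} (hr : 0 < r) (hr' : 0 < r')
    (hsub : ball c r ⊆ ball c' r') :
    |avg u c r - avg u c' r'| ≤ (r' / r) ^ n * (L' * r' ^ α) := by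
  have hint : IntegrableOn (fun x => u x - avg u c' r') (ball c' r') volume :=
    (intOn_ball hu c' r').sub (integrableOn_const measure_ball_lt_top.ne)
  have h1 : avg u c r - avg u c' r' = ⨍ x in ball c r, (u x - avg u c' r') :=
    (setAverage_sub_const hr (intOn_ball hu c r) _).symm
  rw [h1]
  refine (abs_setAverage_le _ _).trans ?_
  have h2 : ⨍ x in ball c r, |u x - avg u c' r'| ≤
      ((volume (ball c' r')).toReal / (volume (ball c r)).toReal) *
        ⨍ x in ball c' r', |u x - avg u c' r'| := by
    rw [setAverage_eq, setAverage_eq, smul_eq_mul, smul_eq_mul]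
    have h3 : ∫ x in ball c r, |u x - avg u c' r'| ≤ ∫ x in ball c' r', |u x - avg u c' r'| :=
      setIntegral_mono_set hint.abs
        (Eventually.of_forall fun x => abs_nonneg _)
        (HasSubset.Subset.eventuallyLE hsub)
    calc (volume (ball c r)).toReal⁻¹ * ∫ x in ball c r, |u x - avg u c' r'|
        ≤ (volume (ball c r)).toReal⁻¹ * ∫ x in ball c' r', |u x - avg u c' r'| :=
          mul_le_mul_of_nonneg_left h3 (by positivity)
      _ = _ := by
          simp only [measureReal_def]
          have hb := (mball_pos c' hr').ne'
          field_simp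
  refine h2.trans ?_
  rw [vol_ratio hr hr' c c']
  exact mul_le_mul_of_nonneg_left (hC c' r' hr') (by positivity)

/-- Lebesgue point estimate: a.e. `x` satisfies `|u x - avg u x r| ≤ D L' r^α` for all `r>0`. -/
lemma lebesgue_bound (hn : 1 ≤ n) {u : (Fin n → ℝ) → ℝ} (hu : LocallyIntegrable u volume)
    {L' α : ℝ} (hα : 0 < α) (hL' : 0 ≤ L')
    (hC : ∀ (c : Fin n → ℝ) (r : ℝ), 0 < r →
      (⨍ x in ball c r, |u x - avg u c r|) ≤ L' * r ^ α) :
    ∀ᵐ x ∂(volume : Measure (Fin n → ℝ)), ∀ r : ℝ, 0 < r →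
      |u x - avg u x r| ≤ ((2:ℝ) ^ n / (1 - (1/2:ℝ) ^ α)) * (L' * r ^ α) := by
  set q : ℝ := (1/2:ℝ) ^ α with hq_def
  have hq0 : 0 ≤ q := Real.rpow_nonneg (by norm_num) _
  have hq1 : q < 1 := Real.rpow_lt_one (by norm_num) (by norm_num) hα
  have hq1' : 0 < 1 - q := by linarith
  filter_upwards [IsUnifLocDoublingMeasure.ae_tendsto_average
    (μ := (volume : Measure (Fin n → ℝ))) hu 1] with x hx
  intro r hr
  set a : ℕ → ℝ := fun k => avg u x (r * (1/2:ℝ) ^ k) with ha_def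
  have hδ : Tendsto (fun k : ℕ => r * (1/2:ℝ) ^ k) atTop (nhdsWithin 0 (Set.Ioi 0)) := by
    rw [tendsto_nhdsWithin_iff]
    constructor
    · have := (tendsto_pow_atTop_nhds_zero_of_lt_one (by norm_num : (0:ℝ) ≤ 1/2)
        (by norm_num)).const_mul r
      simpa using this
    · exact Eventually.of_forall fun k => Set.mem_Ioi.2 (by positivity)
  have hmem : ∀ᶠ k in atTop, x ∈ closedBall x (1 * (r * (1/2:ℝ) ^ k)) :=
    Eventually.of_forall fun k => mem_closedBall_self (by positivity)
  have h_tendsto : Tendsto a atTop (nhds (u x)) :=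
    (hx (fun _ => x) (fun k => r * (1/2:ℝ) ^ k) hδ hmem).congr
      fun k => avg_closedBall hn u x _
  have hpow : ∀ k : ℕ, (r * (1/2:ℝ) ^ k) ^ α = r ^ α * q ^ k := by
    intro k
    rw [Real.mul_rpow hr.le (by positivity)]
    congr 1
    rw [← Real.rpow_natCast ((1/2:ℝ)) k, ← Real.rpow_natCast q k, hq_def,
      ← Real.rpow_mul (by norm_num), ← Real.rpow_mul (by norm_num), mul_comm]
  have hstep : ∀ k : ℕ, |a (k+1) - a k| ≤ (2:ℝ) ^ n * (L' * (r ^ α * q ^ k)) := by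
    intro k
    have hsub : ball x (r * (1/2:ℝ) ^ (k+1)) ⊆ ball x (r * (1/2:ℝ) ^ k) :=
      ball_subset_ball (by
        have : ((1:ℝ)/2) ^ (k+1) ≤ (1/2) ^ k :=
          pow_le_pow_of_le_one (by norm_num) (by norm_num) (Nat.le_succ k)
        nlinarith)
    have h := avg_pair hu hC (by positivity : (0:ℝ) < r * (1/2:ℝ) ^ (k+1))
      (by positivity : (0:ℝ) < r * (1/2:ℝ) ^ k) hsub
    have hratio : (r * (1/2:ℝ) ^ k) / (r * (1/2:ℝ) ^ (k+1)) = 2 := by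
      rw [pow_succ]
      field_simp
    rw [hratio, hpow k] at h
    exact h
  have hsum : ∀ N : ℕ, |a N - a 0| ≤ (2:ℝ) ^ n * (L' * r ^ α) * (1 - q)⁻¹ := by
    intro N
    have h1 : a N - a 0 = ∑ k ∈ Finset.range N, (a (k+1) - a k) :=
      (Finset.sum_range_sub a N).symm
    rw [h1]
    refine (Finset.abs_sum_le_sum_abs _ _).trans ?_
    have h2 : ∑ k ∈ Finset.range N, |a (k+1) - a k| ≤
        ∑ k ∈ Finset.range N, (2:ℝ) ^ n * (L' * r ^ α) * q ^ k :=
      Finset.sum_le_sum fun k _ => (hstep k).trans_eq (by ring)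
    refine h2.trans ?_
    rw [← Finset.mul_sum]
    refine mul_le_mul_of_nonneg_left ?_ (by positivity)
    have := Summable.sum_le_tsum (Finset.range N) (fun i _ => pow_nonneg hq0 i)
      (summable_geometric_of_lt_one hq0 hq1)
    rwa [tsum_geometric_of_lt_one hq0 hq1] at this
  have hlim : Tendsto (fun N => |a N - a 0|) atTop (nhds |u x - a 0|) :=
    ((h_tendsto.sub tendsto_const_nhds).abs)
  have hfin : |u x - a 0| ≤ (2:ℝ) ^ n * (L' * r ^ α) * (1 - q)⁻¹ :=
    le_of_tendsto' hlim hsum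
  have ha0 : a 0 = avg u x r := by simp [ha_def]
  rw [ha0] at hfin
  refine hfin.trans_eq ?_
  field_simp

/-- Hölder estimate at a pair of Lebesgue points. -/
lemma holder_pair {u : (Fin n → ℝ) → ℝ} (hu : LocallyIntegrable u volume)
    {L' α : ℝ} (hα : 0 < α) (hα1 : α ≤ 1) (hL' : 0 ≤ L')
    (hC : ∀ (c : Fin n → ℝ) (r : ℝ), 0 < r →
      (⨍ x in ball c r, |u x - avg u c r|) ≤ L' * r ^ α)
    {x y : Fin n → ℝ}
    (Px : ∀ r : ℝ, 0 < r →
      |u x - avg u x r| ≤ ((2:ℝ) ^ n / (1 - (1/2:ℝ) ^ α)) * (L' * r ^ α))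
    (Py : ∀ r : ℝ, 0 < r →
      |u y - avg u y r| ≤ ((2:ℝ) ^ n / (1 - (1/2:ℝ) ^ α)) * (L' * r ^ α)) :
    |u x - u y| ≤
      (5 * ((2:ℝ) ^ n / (1 - (1/2:ℝ) ^ α)) + 3 * ((3:ℝ)/2) ^ n) * (L' * dist x y ^ α) := by
  set D : ℝ := (2:ℝ) ^ n / (1 - (1/2:ℝ) ^ α) with hD_def
  have hq1 : (1/2:ℝ) ^ α < 1 := Real.rpow_lt_one (by norm_num) (by norm_num) hα
  have hD0 : 0 ≤ D := by
    rw [hD_def]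
    have : (0:ℝ) < 1 - (1/2:ℝ) ^ α := by linarith
    positivity
  rcases eq_or_ne x y with rfl | hxy
  · simp [Real.zero_rpow hα.ne']
  · set d : ℝ := dist x y with hd_def
    have hd : 0 < d := dist_pos.2 hxy
    have hA : (0:ℝ) ≤ d ^ α := Real.rpow_nonneg hd.le _
    have h2d : (2*d) ^ α ≤ 2 * d ^ α := by
      rw [Real.mul_rpow (by norm_num) hd.le]
      refine mul_le_mul_of_nonneg_right ?_ hA
      calc (2:ℝ) ^ α ≤ (2:ℝ) ^ (1:ℝ) :=
            Real.rpow_le_rpow_of_exponent_le one_le_two hα1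
        _ = 2 := Real.rpow_one 2
    have h3d : (3*d) ^ α ≤ 3 * d ^ α := by
      rw [Real.mul_rpow (by norm_num) hd.le]
      refine mul_le_mul_of_nonneg_right ?_ hA
      calc (3:ℝ) ^ α ≤ (3:ℝ) ^ (1:ℝ) :=
            Real.rpow_le_rpow_of_exponent_le (by norm_num) hα1
        _ = 3 := Real.rpow_one 3
    have h1 := Px (2*d) (by positivity)
    have h2 := Py (3*d) (by positivity)
    have hsub : ball x (2*d) ⊆ ball y (3*d) := by
      intro z hz
      rw [mem_ball] at hz ⊢
      calc dist z y ≤ dist z x + dist x y := dist_triangle z x y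
        _ < 2*d + d := by rw [← hd_def]; linarith
        _ = 3*d := by ring
    have h3 := avg_pair hu hC (by positivity : (0:ℝ) < 2*d) (by positivity : (0:ℝ) < 3*d) hsub
    have hrat : (3*d/(2*d)) = (3:ℝ)/2 := by field_simp
    rw [hrat] at h3
    have h32 : (0:ℝ) ≤ ((3:ℝ)/2) ^ n := by positivity
    have htri : |u x - u y| ≤ |u x - avg u x (2*d)| + |avg u x (2*d) - avg u y (3*d)|
        + |u y - avg u y (3*d)| := by
      have := abs_sub_le (u x) (avg u y (3*d)) (u y)
      have := abs_sub_le (u x) (avg u x (2*d)) (avg u y (3*d))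
      have := abs_sub_comm (avg u y (3*d)) (u y)
      linarith [abs_sub_le (u x) (avg u x (2*d)) (avg u y (3*d)),
        abs_sub_le (u x) (avg u y (3*d)) (u y)]
    have e1 : D * (L' * (2*d) ^ α) ≤ D * (L' * (2 * d ^ α)) := by
      refine mul_le_mul_of_nonneg_left (mul_le_mul_of_nonneg_left h2d hL') hD0
    have e2 : D * (L' * (3*d) ^ α) ≤ D * (L' * (3 * d ^ α)) :=
      mul_le_mul_of_nonneg_left (mul_le_mul_of_nonneg_left h3d hL') hD0
    have e3 : ((3:ℝ)/2) ^ n * (L' * (3*d) ^ α) ≤ ((3:ℝ)/2) ^ n * (L' * (3 * d ^ α)) :=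
      mul_le_mul_of_nonneg_left (mul_le_mul_of_nonneg_left h3d hL') h32
    have hL'A : 0 ≤ L' * d ^ α := mul_nonneg hL' hA
    nlinarith [htri, h1, h2, h3, e1, e2, e3]

lemma preimage_ball_sub (h c : Fin n → ℝ) (ρ : ℝ) :
    (fun z : Fin n → ℝ => z - h) ⁻¹' (ball (c - h) ρ) = ball c ρ := by
  ext z
  simp only [Set.mem_preimage, mem_ball]
  rw [dist_sub_right]

lemma shift_setIntegral (f : (Fin n → ℝ) → ℝ) (h c : Fin n → ℝ) (ρ : ℝ) :
    ∫ z in ball c ρ, f (z - h) = ∫ w in ball (c - h) ρ, f w := by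
  rw [← preimage_ball_sub h c ρ]
  exact (measurePreserving_sub_right volume h).setIntegral_preimage_emb
    (MeasurableEquiv.subRight h).measurableEmbedding f _

lemma shift_intOn {f : (Fin n → ℝ) → ℝ} (h c : Fin n → ℝ) (ρ : ℝ)
    (hf : IntegrableOn f (ball (c - h) ρ) volume) :
    IntegrableOn (fun z => f (z - h)) (ball c ρ) volume := by
  rw [← preimage_ball_sub h c ρ]
  exact ((measurePreserving_sub_right volume h).integrableOn_comp_preimage
    (MeasurableEquiv.subRight h).measurableEmbedding).2 hf

lemma vol_ball_eq {ρ : ℝ} (hρ : 0 < ρ) (c c' : Fin n → ℝ) :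
    volume (ball c ρ) = volume (ball c' ρ) := by
  rw [Real.volume_pi_ball _ hρ, Real.volume_pi_ball _ hρ]

lemma shift_avg (f : (Fin n → ℝ) → ℝ) (h c : Fin n → ℝ) {ρ : ℝ} (hρ : 0 < ρ) :
    ⨍ z in ball c ρ, f (z - h) = ⨍ w in ball (c - h) ρ, f w := by
  rw [setAverage_eq, setAverage_eq, shift_setIntegral, measureReal_def, measureReal_def, vol_ball_eq hρ c (c - h)]

/-- The key maximal function estimate. -/
lemma maximal_le {u : (Fin n → ℝ) → ℝ} (hu : LocallyIntegrable u volume)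
    {L' α : ℝ} (hα : 0 < α) (hα1 : α ≤ 1) (hL' : 0 ≤ L')
    (hC : ∀ (c : Fin n → ℝ) (r : ℝ), 0 < r →
      (⨍ x in ball c r, |u x - avg u c r|) ≤ L' * r ^ α)
    (hP : ∀ᵐ z ∂(volume : Measure (Fin n → ℝ)), ∀ r : ℝ, 0 < r →
      |u z - avg u z r| ≤ ((2:ℝ) ^ n / (1 - (1/2:ℝ) ^ α)) * (L' * r ^ α))
    (x y : Fin n → ℝ) :
    maximalFn u x ≤ maximalFn u y +
      ENNReal.ofReal ((5 * ((2:ℝ) ^ n / (1 - (1/2:ℝ) ^ α)) + 3 * ((3:ℝ)/2) ^ n) *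
        (L' * dist x y ^ α)) := by
  set K1 : ℝ := 5 * ((2:ℝ) ^ n / (1 - (1/2:ℝ) ^ α)) + 3 * ((3:ℝ)/2) ^ n with hK1_def
  set t : ℝ := K1 * (L' * dist x y ^ α) with ht_def
  set h : Fin n → ℝ := x - y with hh_def
  refine iSup_le fun c => iSup_le fun ρ => iSup_le fun hρ => iSup_le fun hx => ?_
  -- integrabilities
  have i0 : IntegrableOn u (ball c ρ) volume := intOn_ball hu c ρ
  have i1 : IntegrableOn u (ball (c - h) ρ) volume := intOn_ball hu (c - h) ρ
  have i2 : IntegrableOn (fun z => u (z - h)) (ball c ρ) volume := shift_intOn h c ρ i1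
  -- a.e. bound on the difference
  have hdist : ∀ z : Fin n → ℝ, dist z (z - h) = dist x y := by
    intro z
    rw [dist_eq_norm, dist_eq_norm]
    congr 1
    rw [hh_def]
    abel
  have hPh : ∀ᵐ z ∂(volume : Measure (Fin n → ℝ)), ∀ r : ℝ, 0 < r →
      |u (z - h) - avg u (z - h) r| ≤ ((2:ℝ) ^ n / (1 - (1/2:ℝ) ^ α)) * (L' * r ^ α) :=
    (measurePreserving_sub_right volume h).quasiMeasurePreserving.ae hP
  have hae : ∀ᵐ z ∂(volume.restrict (ball c ρ)), |u z - u (z - h)| ≤ t := by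
    filter_upwards [ae_restrict_of_ae hP, ae_restrict_of_ae hPh] with z hz hzh
    have := holder_pair hu hα hα1 hL' hC hz hzh
    rwa [hdist z] at this
  have ht0 : 0 ≤ t := by
    have hq1 : (1/2:ℝ) ^ α < 1 := Real.rpow_lt_one (by norm_num) (by norm_num) hα
    have h1 : (0:ℝ) < 1 - (1/2:ℝ) ^ α := by linarith
    have hd0 : (0:ℝ) ≤ dist x y ^ α := Real.rpow_nonneg dist_nonneg _
    rw [ht_def, hK1_def]
    positivity
  -- pointwise inequality and integral comparison
  have step1 : ∫ z in ball c ρ, |u z| ≤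
      ∫ z in ball c ρ, (|u (z - h)| + |u z - u (z - h)|) := by
    refine integral_mono_of_nonneg (Filter.Eventually.of_forall fun z => abs_nonneg _)
      (i2.abs.add (i0.sub i2).abs) (Filter.Eventually.of_forall fun z => ?_)
    have := abs_add_le (u (z - h)) (u z - u (z - h))
    simpa [add_sub_cancel] using this
  have step2 : ∫ z in ball c ρ, (|u (z - h)| + |u z - u (z - h)|) =
      (∫ z in ball c ρ, |u (z - h)|) + ∫ z in ball c ρ, |u z - u (z - h)| :=
    integral_add i2.abs (i0.sub i2).abs
  -- average-level inequality
  have hμ := mball_pos c hρ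
  have avg1 : ⨍ z in ball c ρ, |u z| ≤
      (⨍ z in ball c ρ, |u (z - h)|) + ⨍ z in ball c ρ, |u z - u (z - h)| := by
    rw [setAverage_eq, setAverage_eq, setAverage_eq, smul_eq_mul, smul_eq_mul, smul_eq_mul,
      ← mul_add]
    exact mul_le_mul_of_nonneg_left (step1.trans_eq step2) (by positivity)
  have avg2 : ⨍ z in ball c ρ, |u (z - h)| = ⨍ w in ball (c - h) ρ, |u w| :=
    shift_avg (fun w => |u w|) h c hρ
  have avg3 : ⨍ z in ball c ρ, |u z - u (z - h)| ≤ t := setAverage_le_const hρ ht0 hae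
  have key : ⨍ z in ball c ρ, |u z| ≤ (⨍ w in ball (c - h) ρ, |u w|) + t := by
    rw [← avg2]; linarith
  -- pass to ENNReal
  have hy : y ∈ ball (c - h) ρ := by
    rw [mem_ball, dist_eq_norm]
    have : y - (c - h) = x - c := by rw [hh_def]; abel
    rw [this, ← dist_eq_norm]
    exact mem_ball.1 hx
  have hMy : ENNReal.ofReal (⨍ w in ball (c - h) ρ, |u w|) ≤ maximalFn u y :=
    le_iSup_of_le (c - h) (le_iSup_of_le ρ (le_iSup_of_le hρ (le_iSup_of_le hy le_rfl)))
  calc ENNReal.ofReal (⨍ z in ball c ρ, |u z|)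
      ≤ ENNReal.ofReal ((⨍ w in ball (c - h) ρ, |u w|) + t) := ENNReal.ofReal_le_ofReal key
    _ ≤ ENNReal.ofReal (⨍ w in ball (c - h) ρ, |u w|) + ENNReal.ofReal t :=
        ENNReal.ofReal_add_le
    _ ≤ maximalFn u y + ENNReal.ofReal t := add_le_add_left hMy _

lemma setAverage_zero (c : Fin n → ℝ) (r : ℝ) :
    ⨍ _x in ball c r, (0:ℝ) = 0 := by
  rw [setAverage_eq, integral_zero, smul_zero]

end Stmt4

/-- If `u` satisfies the Campanato condition `⨍_Q |u − u_Q| ≤ L diam(Q)^α`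
(i.e. `u ∈ Λ(α)`, `0 < α ≤ 1`), and `Mu` is locally integrable, then `Mu`
satisfies the same condition with constant `C(n) L`.  Here a cube of
half-side `r` has `diam(Q) = √n · (2r)`. -/
theorem stmt4 (n : ℕ) (α : ℝ) (hα : 0 < α) (hα1 : α ≤ 1) :
    ∃ C : ℝ, 0 < C ∧
      ∀ (u : (Fin n → ℝ) → ℝ) (L : ℝ), 0 ≤ L → LocallyIntegrable u volume →
        (∀ (c : Fin n → ℝ) (r : ℝ), 0 < r →
          (⨍ x in ball c r, |u x - ⨍ y in ball c r, u y|) ≤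
            L * (Real.sqrt n * (2 * r)) ^ α) →
        LocallyIntegrable (fun x => (maximalFn u x).toReal) volume →
        ∀ (c : Fin n → ℝ) (r : ℝ), 0 < r →
          (⨍ x in ball c r,
            |(maximalFn u x).toReal - ⨍ y in ball c r, (maximalFn u y).toReal|) ≤
            C * L * (Real.sqrt n * (2 * r)) ^ α := by
  have hq1 : (1/2:ℝ) ^ α < 1 := Real.rpow_lt_one (by norm_num) (by norm_num) hα
  have hq1' : (0:ℝ) < 1 - (1/2:ℝ) ^ α := by linarith
  set D : ℝ := (2:ℝ) ^ n / (1 - (1/2:ℝ) ^ α) with hD_def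
  have hD0 : 0 < D := by positivity
  set K1 : ℝ := 5 * D + 3 * ((3:ℝ)/2) ^ n with hK1_def
  have hK10 : 0 < K1 := by positivity
  refine ⟨2 * K1, by positivity, ?_⟩
  intro u L hL hu hcamp hMloc c₀ r₀ hr₀
  have hRHS0 : 0 ≤ 2 * K1 * L * (Real.sqrt n * (2 * r₀)) ^ α := by
    have hb : (0:ℝ) ≤ Real.sqrt n * (2 * r₀) := by positivity
    have := Real.rpow_nonneg hb α
    positivity
  rcases Nat.eq_zero_or_pos n with hn0 | hn
  · -- degenerate case n = 0
    subst hn0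
    haveI : Unique (Fin 0 → ℝ) := by infer_instance
    have hxy : ∀ x : Fin 0 → ℝ, x = c₀ := fun x => Subsingleton.elim x c₀
    set g : (Fin 0 → ℝ) → ℝ := fun x => (maximalFn u x).toReal with hg_def
    have inner : (⨍ y in ball c₀ r₀, g y) = g c₀ := by
      have h1 : (fun y : Fin 0 → ℝ => g y) = fun _ => g c₀ := funext fun y => by rw [hxy y]
      rw [h1, setAverage_eq, setIntegral_const, smul_smul, measureReal_def,
        inv_mul_cancel₀ (Stmt4.mball_pos c₀ hr₀).ne', one_smul]
    have hz : ∀ x : Fin 0 → ℝ, |g x - ⨍ y in ball c₀ r₀, g y| = 0 := fun x => by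
      rw [inner, hxy x, sub_self, abs_zero]
    calc (⨍ x in ball c₀ r₀, |g x - ⨍ y in ball c₀ r₀, g y|) = ⨍ _x in ball c₀ r₀, (0:ℝ) := by
          simp only [hz]
      _ = 0 := Stmt4.setAverage_zero c₀ r₀
      _ ≤ _ := hRHS0
  · -- main case 1 ≤ n
    set L' : ℝ := L * ((2:ℝ) * Real.sqrt n) ^ α with hL'_def
    have hsq : (0:ℝ) < Real.sqrt n := Real.sqrt_pos.2 (by exact_mod_cast hn)
    have hL'0 : 0 ≤ L' := by
      have := Real.rpow_nonneg (by positivity : (0:ℝ) ≤ 2 * Real.sqrt n) α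
      positivity
    have hC : ∀ (c : Fin n → ℝ) (r : ℝ), 0 < r →
        (⨍ x in ball c r, |u x - Stmt4.avg u c r|) ≤ L' * r ^ α := by
      intro c r hr
      have h1 := hcamp c r hr
      have h2 : Real.sqrt n * (2 * r) = (2 * Real.sqrt n) * r := by ring
      rw [h2, Real.mul_rpow (by positivity) hr.le] at h1
      simp only [Stmt4.avg]
      calc (⨍ x in ball c r, |u x - ⨍ y in ball c r, u y|)
          ≤ L * (((2:ℝ) * Real.sqrt n) ^ α * r ^ α) := h1
        _ = L' * r ^ α := by rw [hL'_def]; ring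
    have hP := Stmt4.lebesgue_bound hn hu hα hL'0 hC
    have hKey := fun x y => Stmt4.maximal_le hu hα hα1 hL'0 hC hP x y
    by_cases hfin : ∀ x, maximalFn u x ≠ ⊤
    · set g : (Fin n → ℝ) → ℝ := fun x => (maximalFn u x).toReal with hg_def
      have hreal : ∀ x y, g x ≤ g y + K1 * (L' * dist x y ^ α) := by
        intro x y
        have hd0 : (0:ℝ) ≤ dist x y ^ α := Real.rpow_nonneg dist_nonneg _
        have ht0 : 0 ≤ K1 * (L' * dist x y ^ α) := by positivity
        have h2 : (maximalFn u x).toReal ≤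
            (maximalFn u y + ENNReal.ofReal (K1 * (L' * dist x y ^ α))).toReal :=
          ENNReal.toReal_mono (by
            simp only [Ne, ENNReal.add_eq_top, not_or]
            exact ⟨hfin y, ENNReal.ofReal_ne_top⟩) (hKey x y)
        rwa [ENNReal.toReal_add (hfin y) ENNReal.ofReal_ne_top,
          ENNReal.toReal_ofReal ht0] at h2
      have habs : ∀ x y, |g x - g y| ≤ K1 * (L' * dist x y ^ α) := by
        intro x y
        rw [abs_sub_le_iff]
        constructor
        · linarith [hreal x y]
        · have := hreal y x
          rw [dist_comm] at this
          linarith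
      have hg_int : IntegrableOn g (ball c₀ r₀) volume := Stmt4.intOn_ball hMloc c₀ r₀
      have hbb : 0 ≤ K1 * (L' * (2 * r₀) ^ α) := by
        have := Real.rpow_nonneg (by positivity : (0:ℝ) ≤ 2 * r₀) α
        positivity
      have hbound : ∀ x ∈ ball c₀ r₀,
          |g x - ⨍ y in ball c₀ r₀, g y| ≤ K1 * (L' * (2 * r₀) ^ α) := by
        intro x hx
        rw [abs_sub_comm]
        have h1 : (⨍ y in ball c₀ r₀, g y) - g x = ⨍ y in ball c₀ r₀, (g y - g x) :=
          (Stmt4.setAverage_sub_const hr₀ hg_int (g x)).symm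
        rw [h1]
        refine (Stmt4.abs_setAverage_le _ _).trans ?_
        refine Stmt4.setAverage_le_const hr₀ hbb ?_
        refine (ae_restrict_mem measurableSet_ball).mono fun y hy => ?_
        refine (habs y x).trans ?_
        have hdle : dist y x ≤ 2 * r₀ := by
          have h2 := mem_ball.1 hx
          have h3 := mem_ball.1 hy
          calc dist y x ≤ dist y c₀ + dist x c₀ := dist_triangle_right y x c₀
            _ ≤ 2 * r₀ := by linarith
        have := Real.rpow_le_rpow dist_nonneg hdle hα.le
        have hL'd : L' * dist y x ^ α ≤ L' * (2 * r₀) ^ α :=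
          mul_le_mul_of_nonneg_left this hL'0
        exact mul_le_mul_of_nonneg_left hL'd hK10.le
      have final1 : (⨍ x in ball c₀ r₀, |g x - ⨍ y in ball c₀ r₀, g y|) ≤
          K1 * (L' * (2 * r₀) ^ α) :=
        Stmt4.setAverage_le_const hr₀ hbb
          ((ae_restrict_mem measurableSet_ball).mono hbound)
      refine final1.trans ?_
      -- constant bookkeeping
      have h2a : ((2:ℝ) * r₀) ^ α = (2:ℝ) ^ α * r₀ ^ α := Real.mul_rpow (by norm_num) hr₀.le
      have h2b : (2:ℝ) ^ α ≤ 2 := by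
        calc (2:ℝ) ^ α ≤ (2:ℝ) ^ (1:ℝ) := Real.rpow_le_rpow_of_exponent_le one_le_two hα1
          _ = 2 := Real.rpow_one 2
      have h2c : Real.sqrt n * (2 * r₀) = (2 * Real.sqrt n) * r₀ := by ring
      have h2d : (Real.sqrt n * (2 * r₀)) ^ α = ((2:ℝ) * Real.sqrt n) ^ α * r₀ ^ α := by
        rw [h2c, Real.mul_rpow (by positivity) hr₀.le]
      have hr0α : (0:ℝ) ≤ r₀ ^ α := Real.rpow_nonneg hr₀.le _
      have hsqα : (0:ℝ) ≤ ((2:ℝ) * Real.sqrt n) ^ α := Real.rpow_nonneg (by positivity) _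
      calc K1 * (L' * (2 * r₀) ^ α) = K1 * L * ((2 * Real.sqrt n) ^ α * ((2:ℝ) ^ α * r₀ ^ α)) := by
            rw [h2a, hL'_def]; ring
        _ ≤ K1 * L * ((2 * Real.sqrt n) ^ α * (2 * r₀ ^ α)) := by
            refine mul_le_mul_of_nonneg_left (mul_le_mul_of_nonneg_left ?_ hsqα) (by positivity)
            exact mul_le_mul_of_nonneg_right h2b hr0α
        _ = 2 * K1 * L * (Real.sqrt n * (2 * r₀)) ^ α := by rw [h2d]; ring
    · push_neg at hfin
      obtain ⟨x₀, hx₀⟩ := hfin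
      have hall : ∀ x, maximalFn u x = ⊤ := by
        intro x
        by_contra hne
        have h1 := hKey x₀ x
        rw [hx₀, top_le_iff, eq_comm] at h1
        rcases ENNReal.add_eq_top.1 h1.symm with h2 | h2
        · exact hne h2
        · exact ENNReal.ofReal_ne_top h2
      have hz : ∀ x : Fin n → ℝ,
          |(maximalFn u x).toReal - ⨍ y in ball c₀ r₀, (maximalFn u y).toReal| = 0 := by
        have hg0 : (fun y : Fin n → ℝ => (maximalFn u y).toReal) = fun _ => (0:ℝ) :=
          funext fun y => by rw [hall y, ENNReal.toReal_top]
        intro x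
        rw [hall x, ENNReal.toReal_top, hg0, Stmt4.setAverage_zero, sub_self, abs_zero]
      calc (⨍ x in ball c₀ r₀,
              |(maximalFn u x).toReal - ⨍ y in ball c₀ r₀, (maximalFn u y).toReal|)
          = ⨍ _x in ball c₀ r₀, (0:ℝ) := by simp only [hz]
        _ = 0 := Stmt4.setAverage_zero c₀ r₀
        _ ≤ _ := hRHS0
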